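/- arXiv:1805.05798 — 13 statements merged into one kernel-verified Lean document; each statement's English description precedes it below -/
import Mathlib

section
/- For every odd integer k ≥ 3, the equation (λ−2)(1−λ)^{k−1} + 1 = 0 has exactly one real root in the open interval (0,1). -/
theorem stmt_0 (k : ℕ) (hk : Odd k) (hk3 : 3 ≤ k) :
    ∃! x : ℝ, x ∈ Set.Ioo (0 : ℝ) 1 ∧ (x - 2) * (1 - x) ^ (k - 1) + 1 = 0 := by
  obtain ⟨n, hn⟩ : ∃ n, k - 1 = n + 1 := ⟨k - 2, by omega⟩
  rw [hn]
  set f : ℝ → ℝ := fun x => (x - 2) * (1 - x) ^ (n + 1) + 1 with hf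
  have key : ∀ x : ℝ, f x = 1 - ((1 - x) ^ (n + 1) + (1 - x) ^ (n + 2)) := by
    intro x; simp only [hf]; ring
  have mono : ∀ a b : ℝ, a ∈ Set.Ioo (0:ℝ) 1 → b ∈ Set.Ioo (0:ℝ) 1 → a < b → f a < f b := by
    intro a b ha hb hab
    rw [key a, key b]
    have h1 : (0:ℝ) ≤ 1 - b := by linarith [hb.2]
    have h2 : 1 - b < 1 - a := by linarith
    have p1 : (1 - b) ^ (n + 1) < (1 - a) ^ (n + 1) := by
      exact pow_lt_pow_left₀ h2 h1 (Nat.succ_ne_zero n)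
    have p2 : (1 - b) ^ (n + 2) < (1 - a) ^ (n + 2) := by
      exact pow_lt_pow_left₀ h2 h1 (Nat.succ_ne_zero (n+1))
    linarith
  have hc : ContinuousOn f (Set.Icc 0 1) := by
    apply Continuous.continuousOn; continuity
  have h0 : f 0 = -1 := by simp [hf]; norm_num
  have h1 : f 1 = 1 := by simp [hf]
  have hmem : (0:ℝ) ∈ Set.Ioo (f 0) (f 1) := by rw [h0, h1]; constructor <;> norm_num
  obtain ⟨x, hx, hfx⟩ := intermediate_value_Ioo zero_le_one hc hmem
  refine ⟨x, ⟨hx, hfx⟩, ?_⟩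
  rintro y ⟨hy, hfy0⟩
  have hfy : f y = 0 := hfy0
  rcases lt_trichotomy y x with h | h | h
  · have := mono y x hy hx h
    rw [hfy, hfx] at this; exact absurd this (lt_irrefl 0)
  · exact h
  · have := mono x y hx hy h
    rw [hfy, hfx] at this; exact absurd this (lt_irrefl 0)
end

section
/- For every odd integer k ≥ 3, the equation (λ−2)^2 (1−λ)^{k−2} − 1 = 0 has exactly one real root in the open interval (0,1). -/
theorem stmt_1 (k : ℕ) (hk : Odd k) (hk3 : 3 ≤ k) :
    ∃! x : ℝ, x ∈ Set.Ioo (0 : ℝ) 1 ∧ (x - 2) ^ 2 * (1 - x) ^ (k - 2) - 1 = 0 := by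
  set m := k - 2 with hm
  have hm0 : m ≠ 0 := by omega
  set g : ℝ → ℝ := fun x => (x - 2) ^ 2 * (1 - x) ^ m with hg
  have hcont : ContinuousOn g (Set.Icc 0 1) := by
    apply Continuous.continuousOn; continuity
  have hg0 : g 0 = 4 := by simp [hg]; norm_num
  have hg1 : g 1 = 0 := by simp [hg, zero_pow hm0]
  have hanti : StrictAntiOn g (Set.Icc (0:ℝ) 1) := by
    intro x hx y hy hxy
    have hx0 := hx.1; have hx1 := hx.2
    have hy0 := hy.1; have hy1 := hy.2
    have h1 : (y - 2)^2 < (x - 2)^2 := by nlinarith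
    have h2 : (1 - y)^m ≤ (1 - x)^m := pow_le_pow_left₀ (by linarith) (by linarith) m
    have h4 : (0:ℝ) < (1 - x)^m := pow_pos (by linarith) m
    have hsq : (0:ℝ) ≤ (y - 2)^2 := sq_nonneg _
    calc g y = (y-2)^2 * (1-y)^m := rfl
      _ ≤ (y-2)^2 * (1-x)^m := by nlinarith
      _ < (x-2)^2 * (1-x)^m := by nlinarith
  have h1mem : (1:ℝ) ∈ Set.Ioo (g 1) (g 0) := by rw [hg0, hg1]; norm_num
  obtain ⟨c, hc, hgc⟩ := intermediate_value_Ioo' (by norm_num : (0:ℝ) ≤ 1) hcont h1mem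
  have hgc' : (c - 2) ^ 2 * (1 - c) ^ m = 1 := hgc
  refine ⟨c, ⟨hc, by linarith⟩, ?_⟩
  intro y ⟨hy, hy2⟩
  have hgy : g y = 1 := by show (y - 2) ^ 2 * (1 - y) ^ m = 1; linarith
  exact hanti.injOn (Set.Ioo_subset_Icc_self hy) (Set.Ioo_subset_Icc_self hc)
    (by rw [hgy, hgc])
end

section
/- For every odd integer k ≥ 3, the equation (λ−2)^2 (1−λ)^{k−1} + 2λ − 3 = 0 has exactly one real root in the interval (0,1) and exactly one real root in the interval (1, 2k/(k+1)). -/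
/-- Uniqueness helper on (0,1): two roots with a < b give a contradiction. -/
lemma stmt_2_aux1 (n : ℕ) (hn0 : n ≠ 0) {a b : ℝ} (ha : a ∈ Set.Ioo (0:ℝ) 1)
    (hb : b ∈ Set.Ioo (0:ℝ) 1)
    (hfa : (a - 2) ^ 2 * (1 - a) ^ n + 2 * a - 3 = 0)
    (hfb : (b - 2) ^ 2 * (1 - b) ^ n + 2 * b - 3 = 0) (hab : a < b) : False := by
  obtain ⟨ha0, ha1⟩ := ha
  obtain ⟨hb0, hb1⟩ := hb
  set P := (1 - a) ^ n with hPdef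
  set Q := (1 - b) ^ n with hQdef
  have hPQ : Q < P := pow_lt_pow_left₀ (by linarith) (by linarith) hn0
  have hP : P * (2 - a) ^ 2 = 3 - 2 * a := by linear_combination hfa
  have hQ : Q * (2 - b) ^ 2 = 3 - 2 * b := by linear_combination hfb
  have key : (3 - 2 * a) * (2 - b) ^ 2 < (3 - 2 * b) * (2 - a) ^ 2 := by
    nlinarith [mul_pos (sub_pos.2 hab) (mul_pos (sub_pos.2 ha1) (sub_pos.2 hb1)),
      mul_pos (sub_pos.2 hab) (show (0:ℝ) < 1 - a * b by nlinarith)]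
  have hM : (0:ℝ) < (2 - a) ^ 2 * (2 - b) ^ 2 :=
    mul_pos (pow_pos (by linarith) 2) (pow_pos (by linarith) 2)
  have e1 : P * ((2 - a) ^ 2 * (2 - b) ^ 2) = (3 - 2 * a) * (2 - b) ^ 2 := by
    linear_combination (2 - b) ^ 2 * hP
  have e2 : Q * ((2 - a) ^ 2 * (2 - b) ^ 2) = (3 - 2 * b) * (2 - a) ^ 2 := by
    linear_combination (2 - a) ^ 2 * hQ
  have := mul_lt_mul_of_pos_right hPQ hM
  rw [e1, e2] at this
  linarith

/-- Uniqueness helper on (1,2): two roots with a < b give a contradiction (n even). -/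
lemma stmt_2_aux2 (n : ℕ) (hn0 : n ≠ 0) (hne : Even n) {a b : ℝ}
    (ha : a ∈ Set.Ioo (1:ℝ) 2) (hb : b ∈ Set.Ioo (1:ℝ) 2)
    (hfa : (a - 2) ^ 2 * (1 - a) ^ n + 2 * a - 3 = 0)
    (hfb : (b - 2) ^ 2 * (1 - b) ^ n + 2 * b - 3 = 0) (hab : a < b) : False := by
  obtain ⟨ha1, ha2⟩ := ha
  obtain ⟨hb1, hb2⟩ := hb
  have ra : (1 - a) ^ n = (a - 1) ^ n := by
    rw [show (1:ℝ) - a = -(a - 1) by ring, hne.neg_pow]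
  have rb : (1 - b) ^ n = (b - 1) ^ n := by
    rw [show (1:ℝ) - b = -(b - 1) by ring, hne.neg_pow]
  rw [ra] at hfa
  rw [rb] at hfb
  set P := (a - 1) ^ n with hPdef
  set Q := (b - 1) ^ n with hQdef
  have hPQ : P < Q := pow_lt_pow_left₀ (by linarith) (by linarith) hn0
  have hP : P * (2 - a) ^ 2 = 3 - 2 * a := by linear_combination hfa
  have hQ : Q * (2 - b) ^ 2 = 3 - 2 * b := by linear_combination hfb
  have key : (3 - 2 * b) * (2 - a) ^ 2 < (3 - 2 * a) * (2 - b) ^ 2 := by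
    nlinarith [mul_pos (sub_pos.2 hab) (mul_pos (show (0:ℝ) < a - 1 by linarith)
        (show (0:ℝ) < 2 - b by linarith)),
      mul_pos (sub_pos.2 hab) (mul_pos (show (0:ℝ) < b - 1 by linarith)
        (show (0:ℝ) < 2 - a by linarith))]
  have hM : (0:ℝ) < (2 - a) ^ 2 * (2 - b) ^ 2 :=
    mul_pos (pow_pos (by linarith) 2) (pow_pos (by linarith) 2)
  have e1 : P * ((2 - a) ^ 2 * (2 - b) ^ 2) = (3 - 2 * a) * (2 - b) ^ 2 := by
    linear_combination (2 - b) ^ 2 * hP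
  have e2 : Q * ((2 - a) ^ 2 * (2 - b) ^ 2) = (3 - 2 * b) * (2 - a) ^ 2 := by
    linear_combination (2 - a) ^ 2 * hQ
  have := mul_lt_mul_of_pos_right hPQ hM
  rw [e1, e2] at this
  linarith

theorem stmt_2 (k : ℕ) (hk : Odd k) (hk3 : 3 ≤ k) :
    (∃! x : ℝ, x ∈ Set.Ioo (0 : ℝ) 1 ∧ (x - 2) ^ 2 * (1 - x) ^ (k - 1) + 2 * x - 3 = 0) ∧
    (∃! x : ℝ, x ∈ Set.Ioo (1 : ℝ) (2 * k / (k + 1)) ∧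
      (x - 2) ^ 2 * (1 - x) ^ (k - 1) + 2 * x - 3 = 0) := by
  obtain ⟨m, hm⟩ := hk
  set n := k - 1 with hn
  have hne : Even n := ⟨m, by omega⟩
  have hn0 : n ≠ 0 := by omega
  have hc : Continuous fun x : ℝ => (x - 2) ^ 2 * (1 - x) ^ n + 2 * x - 3 := by fun_prop
  have hk3' : (3:ℝ) ≤ (k:ℝ) := by exact_mod_cast hk3
  have hkp : (0:ℝ) < (k:ℝ) + 1 := by linarith
  -- bounds on c := 2k/(k+1)
  have hc1 : (1:ℝ) < 2 * k / (k + 1) := by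
    rw [lt_div_iff₀ hkp]; linarith
  have hc2 : 2 * (k:ℝ) / (k + 1) < 2 := by
    rw [div_lt_iff₀ hkp]; linarith
  have hf1 : ((1:ℝ) - 2) ^ 2 * (1 - 1) ^ n + 2 * 1 - 3 = -1 := by
    rw [show (1:ℝ) - 1 = 0 by ring, zero_pow hn0]; ring
  constructor
  · -- part 1
    have hmem : (0:ℝ) ∈ (fun x : ℝ => (x - 2) ^ 2 * (1 - x) ^ n + 2 * x - 3) ''
        Set.Ioo (0:ℝ) 1 := by
      apply intermediate_value_Ioo' zero_le_one hc.continuousOn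
      refine ⟨?_, ?_⟩
      · show ((1:ℝ) - 2) ^ 2 * (1 - 1) ^ n + 2 * 1 - 3 < 0
        rw [hf1]; norm_num
      · show (0:ℝ) < ((0:ℝ) - 2) ^ 2 * (1 - 0) ^ n + 2 * 0 - 3
        norm_num
    obtain ⟨x, hx, hfx⟩ := hmem
    refine ⟨x, ⟨hx, hfx⟩, ?_⟩
    rintro y ⟨hy, hfy⟩
    rcases lt_trichotomy y x with h | h | h
    · exact absurd (stmt_2_aux1 n hn0 hy hx hfy hfx h) not_false
    · exact h
    · exact absurd (stmt_2_aux1 n hn0 hx hy hfx hfy h) not_false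
  · -- part 2: find x₀ in (1, c) with f x₀ > 0
    obtain ⟨x₀, hx₀1, hx₀c, hx₀pos⟩ :
        ∃ x₀ : ℝ, 1 < x₀ ∧ x₀ < 2 * k / (k + 1) ∧
          0 < (x₀ - 2) ^ 2 * (1 - x₀) ^ n + 2 * x₀ - 3 := by
      rcases eq_or_lt_of_le hk3 with hk5 | hk5
      · -- k = 3, n = 2
        refine ⟨149/100, by norm_num, ?_, ?_⟩
        · rw [← hk5]; norm_num
        · have hn2 : n = 2 := by omega
          rw [hn2]; norm_num
      ·
        have hk4 : (4:ℝ) ≤ (k:ℝ) := by exact_mod_cast hk5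
        refine ⟨3/2, by norm_num, ?_, ?_⟩
        · rw [lt_div_iff₀ hkp]; linarith
        · have : ((1:ℝ) - 3/2) ^ n = (1/2 : ℝ) ^ n := by
            rw [show (1:ℝ) - 3/2 = -(1/2) by norm_num, hne.neg_pow]
          rw [this]
          have : (0:ℝ) < (3/2 - 2) ^ 2 * (1/2 : ℝ) ^ n := by positivity
          linarith
    have hmem : (0:ℝ) ∈ (fun x : ℝ => (x - 2) ^ 2 * (1 - x) ^ n + 2 * x - 3) ''
        Set.Ioo (1:ℝ) x₀ := by
      apply intermediate_value_Ioo (le_of_lt hx₀1) hc.continuousOn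
      refine ⟨?_, ?_⟩
      · show ((1:ℝ) - 2) ^ 2 * (1 - 1) ^ n + 2 * 1 - 3 < 0
        rw [hf1]; norm_num
      · exact hx₀pos
    obtain ⟨x, hx, hfx⟩ := hmem
    have hxmem : x ∈ Set.Ioo (1:ℝ) (2 * k / (k + 1)) := ⟨hx.1, lt_trans hx.2 hx₀c⟩
    refine ⟨x, ⟨hxmem, hfx⟩, ?_⟩
    rintro y ⟨hy, hfy⟩
    have hx2 : x ∈ Set.Ioo (1:ℝ) 2 := ⟨hxmem.1, lt_trans hxmem.2 hc2⟩
    have hy2 : y ∈ Set.Ioo (1:ℝ) 2 := ⟨hy.1, lt_trans hy.2 hc2⟩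
    rcases lt_trichotomy y x with h | h | h
    · exact absurd (stmt_2_aux2 n hn0 hne hy2 hx2 hfy hfx h) not_false
    · exact h
    · exact absurd (stmt_2_aux2 n hn0 hne hx2 hy2 hfx hfy h) not_false
end

section
/- For every even integer k ≥ 4, the equation (λ−2)^2 (λ−1)^{k−2} − 1 = 0 has exactly one real root in (0,1) and exactly one real root in (2,3), and no real root in [1,2]. -/
theorem stmt_6 (k : ℕ) (hk : Even k) (hk4 : 4 ≤ k) :
    (∃! x : ℝ, x ∈ Set.Ioo (0 : ℝ) 1 ∧ (x - 2) ^ 2 * (x - 1) ^ (k - 2) - 1 = 0) ∧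
    (∃! x : ℝ, x ∈ Set.Ioo (2 : ℝ) 3 ∧ (x - 2) ^ 2 * (x - 1) ^ (k - 2) - 1 = 0) ∧
    (∀ x ∈ Set.Icc (1 : ℝ) 2, (x - 2) ^ 2 * (x - 1) ^ (k - 2) - 1 ≠ 0) := by
  set m := k - 2 with hm
  have hme : Even m := (Nat.even_sub (by omega)).2 (by simp [hk])
  have hm2 : 2 ≤ m := by omega
  set f : ℝ → ℝ := fun x => (x - 2) ^ 2 * (x - 1) ^ m - 1 with hf
  have hcont : Continuous f := by fun_prop
  have hf0 : f 0 = 3 := by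
    simp only [hf]
    rw [show ((0:ℝ)-1) = -1 by ring, hme.neg_one_pow]; norm_num
  have hf1 : f 1 = -1 := by
    simp only [hf]; rw [show ((1:ℝ)-1) = 0 by ring, zero_pow (by omega)]; ring
  have hf2 : f 2 = -1 := by
    simp only [hf]; norm_num
  have hf3 : 0 < f 3 := by
    simp only [hf]
    have : (1:ℝ) < 2 ^ m := one_lt_pow₀ one_lt_two (by omega)
    have h32 : ((3:ℝ)-1) = 2 := by norm_num
    rw [h32]; nlinarith
  -- strict anti on Icc 0 1
  have hanti : StrictAntiOn f (Set.Icc (0:ℝ) 1) := by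
    intro a ha b hb hab
    simp only [hf]
    have hre : ∀ c : ℝ, (c - 1) ^ m = (1 - c) ^ m := by
      intro c; rw [show (c - 1 : ℝ) = -(1 - c) by ring, hme.neg_pow]
    rw [hre a, hre b]
    have ha1 : a < 1 := lt_of_lt_of_le hab hb.2
    have h1 : (1-b)^m ≤ (1-a)^m :=
      pow_le_pow_left₀ (by linarith [hb.2]) (by linarith) m
    have h2 : (b-2)^2 < (a-2)^2 := by nlinarith [ha.1, hb.2]
    have h3 : 0 < (1-a)^m := pow_pos (by linarith) m
    have : (b-2)^2*(1-b)^m ≤ (b-2)^2*(1-a)^m :=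
      mul_le_mul_of_nonneg_left h1 (sq_nonneg _)
    have : (b-2)^2*(1-a)^m < (a-2)^2*(1-a)^m :=
      mul_lt_mul_of_pos_right h2 h3
    linarith [mul_le_mul_of_nonneg_left h1 (sq_nonneg (b-2))]
  -- strict mono on Icc 2 3
  have hmono : StrictMonoOn f (Set.Icc (2:ℝ) 3) := by
    intro a ha b hb hab
    simp only [hf]
    have h1 : (a-1)^m ≤ (b-1)^m :=
      pow_le_pow_left₀ (by linarith [ha.1]) (by linarith) m
    have h2 : (a-2)^2 < (b-2)^2 := by nlinarith [ha.1, hb.2]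
    have h3 : 0 < (b-1)^m := pow_pos (by linarith [hb.1]) m
    have e1 : (a-2)^2*(a-1)^m ≤ (a-2)^2*(b-1)^m :=
      mul_le_mul_of_nonneg_left h1 (sq_nonneg _)
    have e2 : (a-2)^2*(b-1)^m < (b-2)^2*(b-1)^m :=
      mul_lt_mul_of_pos_right h2 h3
    linarith
  refine ⟨?_, ?_, ?_⟩
  · -- root in (0,1)
    obtain ⟨x, hx, hfx⟩ := intermediate_value_Ioo' (by norm_num : (0:ℝ) ≤ 1)
      hcont.continuousOn (by rw [hf0, hf1]; norm_num : (0:ℝ) ∈ Set.Ioo (f 1) (f 0))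
    refine ⟨x, ⟨hx, hfx⟩, ?_⟩
    rintro y ⟨hy, hfy⟩
    exact hanti.injOn (Set.Ioo_subset_Icc_self hy) (Set.Ioo_subset_Icc_self hx)
      (by simp only [hf] at hfx ⊢; linarith)
  · -- root in (2,3)
    obtain ⟨x, hx, hfx⟩ := intermediate_value_Ioo (by norm_num : (2:ℝ) ≤ 3)
      hcont.continuousOn (by rw [hf2]; exact ⟨by norm_num, hf3⟩ : (0:ℝ) ∈ Set.Ioo (f 2) (f 3))
    refine ⟨x, ⟨hx, hfx⟩, ?_⟩
    rintro y ⟨hy, hfy⟩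
    exact hmono.injOn (Set.Ioo_subset_Icc_self hy) (Set.Ioo_subset_Icc_self hx)
      (by simp only [hf] at hfx ⊢; linarith)
  · intro x hx hcon
    have hlt : (x-2)^2 * (x-1)^m < 1 := by
      rcases eq_or_lt_of_le hx.1 with h1 | h1
      · rw [show (x-1:ℝ) = 0 by linarith, zero_pow (by omega)]; norm_num
      · have ha : (x-1)^m ≤ 1 := pow_le_one₀ (by linarith) (by linarith [hx.2])
        have hb : 0 ≤ (x-1)^m := pow_nonneg (by linarith) m
        have hc : (x-2)^2 < 1 := by nlinarith [hx.2]
        nlinarith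
    exact absurd hcon (by intro h; linarith)
end

section
/- For every even integer k ≥ 4, the equation (λ−2)^2 (1−λ)^{k−1} + 1 = 0 has exactly one real root in the interval (2,3). -/
theorem stmt_7 (k : ℕ) (hk : Even k) (hk4 : 4 ≤ k) :
    ∃! x : ℝ, x ∈ Set.Ioo (2 : ℝ) 3 ∧ (x - 2) ^ 2 * (1 - x) ^ (k - 1) + 1 = 0 := by
  have hm : Odd (k - 1) := by
    rcases hk with ⟨n, hn⟩
    have : 2 ≤ n := by omega
    refine ⟨n - 1, by omega⟩
  set g : ℝ → ℝ := fun x => (x - 2) ^ 2 * (x - 1) ^ (k - 1) with hg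
  -- equation equivalence
  have heq : ∀ x : ℝ, ((x - 2) ^ 2 * (1 - x) ^ (k - 1) + 1 = 0) ↔ g x = 1 := by
    intro x
    have h1 : (1 - x : ℝ) = -(x - 1) := by ring
    rw [h1, hm.neg_pow]
    constructor <;> intro h <;> simp [hg] at * <;> linarith
  -- strict mono on Icc 2 3
  have hmono : StrictMonoOn g (Set.Icc (2 : ℝ) 3) := by
    intro a ha b hb hab
    have ha2 : (0 : ℝ) ≤ a - 2 := by linarith [ha.1]
    have ha1 : (0 : ℝ) ≤ a - 1 := by linarith [ha.1]
    have h1 : (a - 2) ^ 2 < (b - 2) ^ 2 := by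
      apply pow_lt_pow_left₀ (by linarith) ha2 (by norm_num)
    have h2 : (a - 1) ^ (k - 1) < (b - 1) ^ (k - 1) := by
      apply pow_lt_pow_left₀ (by linarith) ha1 (by omega)
    exact mul_lt_mul'' h1 h2 (by positivity) (by positivity)
  have hcont : ContinuousOn g (Set.Icc (2 : ℝ) 3) := by fun_prop
  have hg2 : g 2 = 0 := by simp [hg]
  have hg3 : g 3 = 2 ^ (k - 1) := by norm_num [hg]
  have hlt : (1 : ℝ) ∈ Set.Ioo (g 2) (g 3) := by
    rw [hg2, hg3]
    constructor
    · norm_num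
    · exact one_lt_pow₀ one_lt_two (by omega)
  have := intermediate_value_Ioo (by norm_num : (2:ℝ) ≤ 3) hcont hlt
  obtain ⟨x, hx, hgx⟩ := this
  refine ⟨x, ⟨hx, (heq x).mpr hgx⟩, ?_⟩
  rintro y ⟨hy, hy2⟩
  have hgy : g y = 1 := (heq y).mp hy2
  exact hmono.injOn (Set.mem_Icc_of_Ioo hy) (Set.mem_Icc_of_Ioo hx) (by rw [hgy, hgx])
end

section
/- For every even integer k ≥ 4, the equation (λ−2)^2 (λ−1)^{k−1} − 2λ + 3 = 0 has at least one real root in each of the intervals (0,1), (1, 2k/(k+1)), and (2,3). -/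
theorem stmt_8 (k : ℕ) (hk : Even k) (hk4 : 4 ≤ k) :
    (∃ x ∈ Set.Ioo (0 : ℝ) 1, (x - 2) ^ 2 * (x - 1) ^ (k - 1) - 2 * x + 3 = 0) ∧
    (∃ x ∈ Set.Ioo (1 : ℝ) (2 * k / (k + 1)),
      (x - 2) ^ 2 * (x - 1) ^ (k - 1) - 2 * x + 3 = 0) ∧
    (∃ x ∈ Set.Ioo (2 : ℝ) 3, (x - 2) ^ 2 * (x - 1) ^ (k - 1) - 2 * x + 3 = 0) := by
  have hodd : Odd (k - 1) := Nat.Even.sub_odd (by omega) hk odd_one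
  set f : ℝ → ℝ := fun x => (x - 2) ^ 2 * (x - 1) ^ (k - 1) - 2 * x + 3 with hf
  have hc : Continuous f := by fun_prop
  have hK : (4:ℝ) ≤ (k:ℝ) := by exact_mod_cast hk4
  have hK1 : (0:ℝ) < (k:ℝ) + 1 := by linarith
  have hf0 : f 0 = -1 := by
    have h1 : ((0:ℝ) - 1) ^ (k - 1) = -1 := by
      norm_num [hodd.neg_one_pow]
    simp only [hf, h1]; ring
  have hf1 : f 1 = 1 := by
    have h1 : ((1:ℝ) - 1) ^ (k - 1) = 0 := by
      norm_num [zero_pow (show k - 1 ≠ 0 by omega)]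
    simp only [hf, h1]; ring
  have hf2 : f 2 = -1 := by
    have h1 : ((2:ℝ) - 2) ^ 2 = 0 := by norm_num
    simp only [hf, h1]; ring
  have hf3 : 0 < f 3 := by
    have h1 : (2:ℝ)^3 ≤ 2 ^ (k - 1) := by
      apply pow_le_pow_right₀ (by norm_num) (by omega)
    simp only [hf]
    norm_num
    nlinarith
  set b : ℝ := 2 * (k:ℝ) / ((k:ℝ) + 1) with hb
  have hb1 : (1:ℝ) < b := by
    rw [hb, lt_div_iff₀ hK1]; linarith
  have hbm1 : b - 1 = ((k:ℝ) - 1) / ((k:ℝ) + 1) := by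
    rw [hb]; field_simp; ring
  have hb1le : 0 ≤ b - 1 := by linarith
  have hb1lt : b - 1 ≤ 1 := by
    rw [hbm1, div_le_one hK1]; linarith
  have hfb : f b < 0 := by
    have hpow : (b - 1) ^ (k - 1) ≤ 1 := pow_le_one₀ hb1le hb1lt
    have h2 : f b ≤ (b - 2)^2 - 2 * b + 3 := by
      simp only [hf]
      have := mul_le_of_le_one_right (sq_nonneg (b - 2)) hpow
      linarith
    have h3 : (b - 2)^2 - 2 * b + 3 = (-(k:ℝ)^2 + 2*(k:ℝ) + 7) / ((k:ℝ)+1)^2 := by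
      rw [hb]; field_simp; ring
    have h4 : (-(k:ℝ)^2 + 2*(k:ℝ) + 7) / ((k:ℝ)+1)^2 < 0 := by
      apply div_neg_of_neg_of_pos (by nlinarith) (by positivity)
    linarith
  refine ⟨?_, ?_, ?_⟩
  · obtain ⟨x, hx, hfx⟩ := intermediate_value_Ioo (by norm_num : (0:ℝ) ≤ 1)
      hc.continuousOn (show (0:ℝ) ∈ Set.Ioo (f 0) (f 1) by rw [hf0, hf1]; norm_num)
    exact ⟨x, hx, hfx⟩
  · obtain ⟨x, hx, hfx⟩ := intermediate_value_Ioo' (le_of_lt hb1)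
      hc.continuousOn (show (0:ℝ) ∈ Set.Ioo (f b) (f 1) by rw [hf1]; exact ⟨hfb, one_pos⟩)
    exact ⟨x, hx, hfx⟩
  · obtain ⟨x, hx, hfx⟩ := intermediate_value_Ioo (by norm_num : (2:ℝ) ≤ 3)
      hc.continuousOn (show (0:ℝ) ∈ Set.Ioo (f 2) (f 3) by rw [hf2]; exact ⟨by norm_num, hf3⟩)
    exact ⟨x, hx, hfx⟩
end

section
/- For every even integer k ≥ 4, the equation ((λ−2)(λ−1)^{k−1} − 1)^2 − (λ−1)^k = 0 has no real root λ with λ ≥ 3 and no real root in the open interval (1,2). -/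
theorem stmt_9 (k : ℕ) (hk : Even k) (hk4 : 4 ≤ k) :
    (∀ x : ℝ, 3 ≤ x → ((x - 2) * (x - 1) ^ (k - 1) - 1) ^ 2 - (x - 1) ^ k ≠ 0) ∧
    (∀ x ∈ Set.Ioo (1 : ℝ) 2, ((x - 2) * (x - 1) ^ (k - 1) - 1) ^ 2 - (x - 1) ^ k ≠ 0) := by
  obtain ⟨m, rfl⟩ : ∃ m, k = m + 4 := ⟨k - 4, by omega⟩
  constructor
  · intro x hx
    have ht : (2 : ℝ) ≤ x - 1 := by linarith
    have ht0 : (0 : ℝ) < x - 1 := by linarith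
    have hk1 : m + 4 - 1 = m + 3 := by omega
    rw [hk1]
    have hp : (2 : ℝ) ^ (m + 2) ≤ (x - 1) ^ (m + 2) :=
      pow_le_pow_left₀ (by norm_num) ht _
    have hp4 : (4 : ℝ) ≤ (2 : ℝ) ^ (m + 2) := by
      calc (4 : ℝ) = 2 ^ 2 := by norm_num
      _ ≤ 2 ^ (m + 2) := pow_le_pow_right₀ (by norm_num) (by omega)
    have hp' : (4 : ℝ) ≤ (x - 1) ^ (m + 2) := le_trans hp4 hp
    have h3 : (x - 1) ^ (m + 3) = (x - 1) * (x - 1) ^ (m + 2) := by ring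
    have h4 : (x - 1) ^ (m + 4) = (x - 1) ^ 2 * (x - 1) ^ (m + 2) := by ring
    have hpos : ((x - 2) * (x - 1) ^ (m + 3) - 1) ^ 2 - (x - 1) ^ (m + 4) > 0 := by
      rw [h3, h4]
      set p := (x - 1) ^ (m + 2) with hpdef
      set t := x - 1 with htdef
      have hx2 : x - 2 = t - 1 := by rw [htdef]; ring
      rw [hx2]
      nlinarith [sq_nonneg (t * p), sq_nonneg ((t - 1) * t * p - 1), mul_pos ht0 (lt_of_lt_of_le (by norm_num : (0:ℝ) < 4) hp'), sq_nonneg (t - 2), mul_le_mul_of_nonneg_left hp' (sq_nonneg t)]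
    exact ne_of_gt hpos
  · rintro x ⟨hx1, hx2⟩
    have ht0 : (0 : ℝ) < x - 1 := by linarith
    have ht1 : x - 1 < 1 := by linarith
    have hk1 : m + 4 - 1 = m + 3 := by omega
    rw [hk1]
    have htk : (x - 1) ^ (m + 4) < 1 := pow_lt_one₀ (le_of_lt ht0) ht1 (by omega)
    have htp : (0 : ℝ) < (x - 1) ^ (m + 3) := pow_pos ht0 _
    have hneg : (x - 2) * (x - 1) ^ (m + 3) < 0 :=
      mul_neg_of_neg_of_pos (by linarith) htp
    have hb : (x - 2) * (x - 1) ^ (m + 3) - 1 < -1 := by linarith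
    have hsq : 1 < ((x - 2) * (x - 1) ^ (m + 3) - 1) ^ 2 := by nlinarith
    have : ((x - 2) * (x - 1) ^ (m + 3) - 1) ^ 2 - (x - 1) ^ (m + 4) > 0 := by linarith
    exact ne_of_gt this
end

section
/- For every even integer k ≥ 4, the function f(λ) = ((λ−2)(λ−1)^{k−1} − 1)^2 − (λ−1)^k satisfies f(3) > 0, and the equation f(λ) = 0 has exactly one real root in the interval (2,3). -/
theorem stmt_10 (k : ℕ) (hk : Even k) (hk4 : 4 ≤ k) :
    (0 < ((3 - 2 : ℝ) * (3 - 1) ^ (k - 1) - 1) ^ 2 - (3 - 1 : ℝ) ^ k) ∧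
    (∃! x : ℝ, x ∈ Set.Ioo (2 : ℝ) 3 ∧
      ((x - 2) * (x - 1) ^ (k - 1) - 1) ^ 2 - (x - 1) ^ k = 0) := by
  obtain ⟨m, hm⟩ := hk
  obtain ⟨n, rfl⟩ : ∃ n, m = n + 2 := ⟨m - 2, by omega⟩
  subst hm
  have hk1 : (n + 2) + (n + 2) - 1 = 2 * n + 3 := by omega
  have hk2 : (n + 2) + (n + 2) = 2 * n + 4 := by omega
  rw [hk1, hk2]
  set φ : ℝ → ℝ := fun x => (x - 2) * (x - 1) ^ (n + 1) - ((x - 1) ^ (n + 2))⁻¹ - 1 with hφ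
  have hfφ : ∀ x : ℝ, 1 < x →
      ((x - 2) * (x - 1) ^ (2 * n + 3) - 1) ^ 2 - (x - 1) ^ (2 * n + 4)
        = (x - 1) ^ (n + 2) * φ x *
          (((x - 2) * (x - 1) ^ (2 * n + 3) - 1) + (x - 1) ^ (n + 2)) := by
    intro x hx
    have h0 : x - 1 ≠ 0 := by intro h; nlinarith
    simp only [hφ]
    field_simp
    ring
  have hpos2 : ∀ x ∈ Set.Ioo (2 : ℝ) 3,
      0 < ((x - 2) * (x - 1) ^ (2 * n + 3) - 1) + (x - 1) ^ (n + 2) := by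
    intro x hx
    have h1 : 0 < x - 2 := by linarith [hx.1]
    have hx1 : (0:ℝ) < x - 1 := by linarith [hx.1]
    have h2 : (0:ℝ) < (x - 1) ^ (2 * n + 3) := by positivity
    have h3 : (1:ℝ) < (x - 1) ^ (n + 2) :=
      one_lt_pow₀ (by linarith [hx.1]) (by omega)
    nlinarith
  have hmono : StrictMonoOn φ (Set.Icc (2:ℝ) 3) := by
    intro x hx y hy hxy
    have hx1 : (1:ℝ) ≤ x - 1 := by linarith [hx.1]
    have hy1 : (1:ℝ) ≤ y - 1 := by linarith [hy.1]
    have hpx : (0:ℝ) < (x - 1) ^ (n + 1) := by positivity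
    have hpy : (0:ℝ) < (y - 1) ^ (n + 1) := by positivity
    have hple : (x - 1) ^ (n + 1) ≤ (y - 1) ^ (n + 1) :=
      pow_le_pow_left₀ (by linarith) (by linarith) _
    have hA : (x - 2) * (x - 1) ^ (n + 1) < (y - 2) * (y - 1) ^ (n + 1) := by
      have h1 : (0:ℝ) ≤ x - 2 := by linarith [hx.1]
      nlinarith
    have hB : ((y - 1) ^ (n + 2))⁻¹ ≤ ((x - 1) ^ (n + 2))⁻¹ := by
      have h1 : (0:ℝ) < (x - 1) ^ (n + 2) := by positivity
      have h2 : (x - 1) ^ (n + 2) ≤ (y - 1) ^ (n + 2) :=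
        pow_le_pow_left₀ (by linarith) (by linarith) _
      exact inv_anti₀ h1 h2
    simp only [hφ]
    linarith
  have hcont : ContinuousOn φ (Set.Icc (2:ℝ) 3) := by
    apply ContinuousOn.sub
    apply ContinuousOn.sub
    · exact (((continuous_id.sub continuous_const).mul
        ((continuous_id.sub continuous_const).pow _)).continuousOn)
    · exact (((continuous_id.sub continuous_const).pow _).continuousOn).inv₀
        fun x hx => by
          have : (0:ℝ) < x - 1 := by linarith [hx.1]
          exact pow_ne_zero _ this.ne'
    · exact continuousOn_const
  have hφ2 : φ 2 = -2 := by norm_num [hφ]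
  have hφ3 : 0 < φ 3 := by
    have h1 : (2:ℝ) ≤ 2 ^ (n + 1) := le_self_pow₀ one_le_two (by omega)
    have h2 : (2:ℝ) ^ (n + 2) ≥ 4 := by
      calc (4:ℝ) = 2 ^ 2 := by norm_num
      _ ≤ 2 ^ (n + 2) := pow_le_pow_right₀ one_le_two (by omega)
    have h3 : ((2:ℝ) ^ (n + 2))⁻¹ ≤ 4⁻¹ := by
      apply inv_anti₀ (by norm_num) h2
    simp only [hφ]
    norm_num
    nlinarith
  have hivt : (0:ℝ) ∈ Set.Ioo (φ 2) (φ 3) := ⟨by rw [hφ2]; norm_num, hφ3⟩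
  obtain ⟨c, hc, hφc⟩ := intermediate_value_Ioo (by norm_num : (2:ℝ) ≤ 3) hcont hivt
  constructor
  · norm_num
    have ha : (8:ℝ) ≤ 2 ^ (2 * n + 3) := by
      calc (8:ℝ) = 2 ^ 3 := by norm_num
      _ ≤ 2 ^ (2 * n + 3) := pow_le_pow_right₀ one_le_two (by omega)
    have h24 : (2:ℝ) ^ (2 * n + 4) = 2 * 2 ^ (2 * n + 3) := by ring
    nlinarith
  · refine ⟨c, ⟨hc, ?_⟩, ?_⟩
    · rw [hfφ c (by linarith [hc.1]), hφc]; ring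
    · rintro y ⟨hy, hfy⟩
      have hφy : φ y = 0 := by
        rw [hfφ y (by linarith [hy.1])] at hfy
        have h1 : (0:ℝ) < (y - 1) ^ (n + 2) := by
          have : (0:ℝ) < y - 1 := by linarith [hy.1]
          positivity
        have h2 := hpos2 y hy
        rcases mul_eq_zero.1 hfy with h | h
        · rcases mul_eq_zero.1 h with h' | h'
          · exact absurd h' (ne_of_gt h1)
          · exact h'
        · exact absurd h (ne_of_gt h2)
      have : y = c := by
        apply hmono.injOn (Set.Ioo_subset_Icc_self hy) (Set.Ioo_subset_Icc_self hc)
        rw [hφy, hφc]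
      exact this
end

section
/- The function g(t) = −ln(t+1)/ln(t) is strictly increasing on the open interval (0,1). -/
theorem stmt_11 :
    StrictMonoOn (fun t : ℝ => -Real.log (t + 1) / Real.log t) (Set.Ioo 0 1) := by
  intro a ha b hb hab
  simp only
  rw [show -Real.log (a + 1) / Real.log a = Real.log (a + 1) / -Real.log a from by ring,
      show -Real.log (b + 1) / Real.log b = Real.log (b + 1) / -Real.log b from by ring]
  have hla : 0 < -Real.log a := by
    have := Real.log_neg ha.1 ha.2
    linarith
  have hlb : 0 < -Real.log b := by
    have := Real.log_neg hb.1 hb.2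
    linarith
  have h1 : Real.log (a + 1) < Real.log (b + 1) :=
    Real.log_lt_log (by linarith [ha.1]) (by linarith)
  have h2 : -Real.log b < -Real.log a := by
    have := Real.log_lt_log ha.1 hab
    linarith
  have h3 : 0 ≤ Real.log (a + 1) := Real.log_nonneg (by linarith [ha.1])
  calc Real.log (a + 1) / -Real.log a < Real.log (b + 1) / -Real.log a := by
        exact div_lt_div_of_pos_right h1 hla
      _ < Real.log (b + 1) / -Real.log b := by
        have hb1 : 0 < Real.log (b + 1) := Real.log_pos (by linarith [ha.1])
        exact div_lt_div_of_pos_left hb1 hlb h2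
end

section
/- The function g(t) = (ln(1−2t) − 2 ln(1−t))/ln(t) is strictly increasing on the open interval (0, 1/2). -/
theorem stmt_13 :
    StrictMonoOn (fun t : ℝ => (Real.log (1 - 2 * t) - 2 * Real.log (1 - t)) / Real.log t)
      (Set.Ioo 0 (1 / 2)) := by
  have key : ∀ x ∈ Set.Ioo (0:ℝ) (1/2),
      HasDerivAt (fun t : ℝ => (Real.log (1 - 2 * t) - 2 * Real.log (1 - t)) / Real.log t)
        ((((1 - 2*x)⁻¹ * (-2) - 2 * ((1 - x)⁻¹ * (-1))) * Real.log x
          - (Real.log (1 - 2*x) - 2 * Real.log (1 - x)) * x⁻¹) / (Real.log x) ^ 2) x := by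
    intro x hx
    obtain ⟨hx0, hx2⟩ := hx
    have h12 : (0:ℝ) < 1 - 2*x := by linarith
    have h1 : (0:ℝ) < 1 - x := by linarith
    have hlog : Real.log x < 0 := Real.log_neg hx0 (by linarith)
    have hA : HasDerivAt (fun t : ℝ => 1 - 2 * t) (-2) x := by
      simpa [Pi.sub_def] using (hasDerivAt_const x (1:ℝ)).sub ((hasDerivAt_id x).const_mul 2)
    have hB : HasDerivAt (fun t : ℝ => 1 - t) (-1) x := by
      simpa [Pi.sub_def] using (hasDerivAt_const x (1:ℝ)).sub (hasDerivAt_id x)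
    have hL1 : HasDerivAt (fun t : ℝ => Real.log (1 - 2 * t)) ((1 - 2*x)⁻¹ * (-2)) x :=
      by have := (Real.hasDerivAt_log (ne_of_gt h12)).comp x hA; exact this
    have hL2 : HasDerivAt (fun t : ℝ => Real.log (1 - t)) ((1 - x)⁻¹ * (-1)) x :=
      (Real.hasDerivAt_log (ne_of_gt h1)).comp x hB
    have hnum : HasDerivAt (fun t : ℝ => Real.log (1 - 2 * t) - 2 * Real.log (1 - t))
        ((1 - 2*x)⁻¹ * (-2) - 2 * ((1 - x)⁻¹ * (-1))) x := hL1.sub (hL2.const_mul 2)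
    have hden : HasDerivAt Real.log x⁻¹ x := Real.hasDerivAt_log (ne_of_gt hx0)
    exact hnum.div hden (ne_of_lt hlog)
  apply strictMonoOn_of_deriv_pos (convex_Ioo 0 (1/2))
  · intro x hx
    exact ((key x hx).differentiableAt).continuousAt.continuousWithinAt
  · intro x hx
    rw [interior_Ioo] at hx
    rw [(key x hx).deriv]
    obtain ⟨hx0, hx2⟩ := hx
    have h12 : (0:ℝ) < 1 - 2*x := by linarith
    have h1 : (0:ℝ) < 1 - x := by linarith
    have hlog : Real.log x < 0 := Real.log_neg hx0 (by linarith)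
    have hinv : (1 - x)⁻¹ < (1 - 2*x)⁻¹ := by
      apply inv_strictAnti₀ h12; linarith
    have hN' : (1 - 2*x)⁻¹ * (-2) - 2 * ((1 - x)⁻¹ * (-1)) < 0 := by nlinarith
    have hN : Real.log (1 - 2*x) - 2 * Real.log (1 - x) < 0 := by
      have hlt : Real.log (1 - 2*x) < Real.log ((1 - x)^2) :=
        Real.log_lt_log h12 (by nlinarith)
      rw [Real.log_pow] at hlt
      push_cast at hlt
      linarith
    have hterm1 : 0 < ((1 - 2*x)⁻¹ * (-2) - 2 * ((1 - x)⁻¹ * (-1))) * Real.log x :=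
      mul_pos_of_neg_of_neg hN' hlog
    have hterm2 : (Real.log (1 - 2*x) - 2 * Real.log (1 - x)) * x⁻¹ < 0 :=
      mul_neg_of_neg_of_pos hN (inv_pos.mpr hx0)
    apply div_pos (by linarith) (lt_of_le_of_ne (sq_nonneg _) (Ne.symm (pow_ne_zero 2 (ne_of_lt hlog))))
end

section
/- For each odd integer k ≥ 3 let λ_k be the unique real root in (0,1) of (λ−2)(1−λ)^{k−1} + 1 = 0. Then the sequence (λ_k) (indexed over odd k) is strictly decreasing in k and converges to 0 as k → ∞. -/
private lemma aux_bound (m : ℕ) (hm : 1 ≤ m) (x : ℝ) (hx0 : 0 < x) (hx1 : x < 1)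
    (heq : (x - 2) * (1 - x) ^ m + 1 = 0) : x ≤ 1 / m := by
  have he : (2 - x) * (1 - x) ^ m = 1 := by linear_combination -heq
  have hp : (0:ℝ) < (1 - x) ^ m := pow_pos (by linarith) m
  have h1 : (1:ℝ)/2 ≤ (1 - x) ^ m := by nlinarith
  have h2 : 1 + (m:ℝ) * x ≤ (1 + x) ^ m := one_add_mul_le_pow (by linarith) m
  have h3 : (1 + x) ^ m * (1 - x) ^ m ≤ 1 := by
    rw [← mul_pow]
    apply pow_le_one₀ <;> nlinarith
  have hmx : (m:ℝ) * x ≤ 1 := by nlinarith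
  have hm' : (0:ℝ) < m := by exact_mod_cast hm
  rw [le_div_iff₀ hm']
  linarith [hmx]

theorem stmt_14 (lam : ℕ → ℝ)
    (hroot : ∀ k, Odd k → 3 ≤ k →
      lam k ∈ Set.Ioo (0 : ℝ) 1 ∧ (lam k - 2) * (1 - lam k) ^ (k - 1) + 1 = 0) :
    (∀ k₁ k₂, Odd k₁ → Odd k₂ → 3 ≤ k₁ → k₁ < k₂ → lam k₂ < lam k₁) ∧
    Filter.Tendsto (fun n => lam (2 * n + 3)) Filter.atTop (nhds 0) := by
  constructor
  · intro k₁ k₂ h1 h2 hk1 hlt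
    have hk2 : 3 ≤ k₂ := hk1.trans hlt.le
    obtain ⟨⟨p1, q1⟩, e1⟩ := hroot k₁ h1 hk1
    obtain ⟨⟨p2, q2⟩, e2⟩ := hroot k₂ h2 hk2
    set a := lam k₁
    set b := lam k₂
    have ea : (2 - a) * (1 - a) ^ (k₁ - 1) = 1 := by linear_combination -e1
    have eb : (2 - b) * (1 - b) ^ (k₂ - 1) = 1 := by linear_combination -e2
    by_contra hle
    push_neg at hle  -- a ≤ b
    have hb0 : (0:ℝ) < 1 - b := by linarith
    have hmn : k₁ - 1 < k₂ - 1 := by omega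
    have hpow : (1 - b) ^ (k₂ - 1) < (1 - b) ^ (k₁ - 1) :=
      pow_lt_pow_right_of_lt_one₀ hb0 (by linarith) hmn
    have hgt : 1 < (2 - b) * (1 - b) ^ (k₁ - 1) := by nlinarith
    have hle2 : (2 - b) * (1 - b) ^ (k₁ - 1) ≤ (2 - a) * (1 - a) ^ (k₁ - 1) := by
      apply mul_le_mul (by linarith) (pow_le_pow_left₀ (by linarith) (by linarith) _)
        (by positivity) (by linarith)
    nlinarith
  · have hb : ∀ n : ℕ, lam (2 * n + 3) ≤ 1 / (n + 1) := by
      intro n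
      obtain ⟨⟨p, q⟩, e⟩ := hroot (2 * n + 3) ⟨n + 1, by ring⟩ (by omega)
      have h := aux_bound (2 * n + 3 - 1) (by omega) _ p q e
      have hc : (2 * n + 3 - 1 : ℕ) = 2 * n + 2 := by omega
      rw [hc] at h
      have : (1:ℝ) / ((2 * n + 2 : ℕ) : ℝ) ≤ 1 / (n + 1) := by
        apply one_div_le_one_div_of_le (by positivity)
        push_cast
        linarith [Nat.cast_nonneg (α := ℝ) n]
      linarith
    have h0 : ∀ n : ℕ, 0 ≤ lam (2 * n + 3) := fun n =>
      (hroot (2 * n + 3) ⟨n + 1, by ring⟩ (by omega)).1.1.le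
    exact squeeze_zero h0 hb tendsto_one_div_add_atTop_nhds_zero_nat
end

section
/- For each odd integer k ≥ 3 let λ_k be the unique real root in (1, 2k/(k+1)) of (λ−2)^2 (1−λ)^{k−1} + 2λ − 3 = 0. Then the sequence (λ_k) (indexed over odd k) is strictly increasing in k and converges to 3/2 as k → ∞. -/
private lemma aux_root (k : ℕ) (hk : Odd k) (l : ℝ)
    (h1 : 1 < l) (h2 : l < 2 * (k : ℝ) / ((k : ℝ) + 1))
    (heq : (l - 2) ^ 2 * (1 - l) ^ (k - 1) + 2 * l - 3 = 0) :
    l < 3 / 2 ∧ (l - 1) ^ (k - 1) = (3 - 2 * l) / (2 - l) ^ 2 ∧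
      3 - 2 * l ≤ (1 / 2 : ℝ) ^ (k - 1) := by
  have hkpos : (0 : ℝ) ≤ (k : ℝ) := Nat.cast_nonneg k
  have hl2 : l < 2 := by
    have : 2 * (k : ℝ) / ((k : ℝ) + 1) < 2 := by
      rw [div_lt_iff₀ (by linarith)]; linarith
    linarith
  have hev : Even (k - 1) := Nat.Odd.sub_odd hk odd_one
  have hpowe : (1 - l) ^ (k - 1) = (l - 1) ^ (k - 1) := by
    rw [show (1 - l) = -(l - 1) by ring, hev.neg_pow]
  have heq' : (l - 2) ^ 2 * (l - 1) ^ (k - 1) = 3 - 2 * l := by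
    rw [hpowe] at heq; linarith
  have hsq : (0 : ℝ) < (l - 2) ^ 2 := by nlinarith
  have hpowpos : (0 : ℝ) < (l - 1) ^ (k - 1) := pow_pos (by linarith) _
  have h32 : l < 3 / 2 := by nlinarith [mul_pos hsq hpowpos]
  refine ⟨h32, ?_, ?_⟩
  · rw [eq_div_iff (by nlinarith : ((2 : ℝ) - l) ^ 2 ≠ 0)]
    linear_combination heq'
  · have hb1 : (l - 2) ^ 2 ≤ 1 := by nlinarith
    have hb2 : (l - 1) ^ (k - 1) ≤ (1 / 2 : ℝ) ^ (k - 1) :=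
      pow_le_pow_left₀ (by linarith) (by linarith) _
    calc 3 - 2 * l = (l - 2) ^ 2 * (l - 1) ^ (k - 1) := heq'.symm
      _ ≤ 1 * (1 / 2 : ℝ) ^ (k - 1) :=
          mul_le_mul hb1 hb2 (le_of_lt hpowpos) zero_le_one
      _ = (1 / 2 : ℝ) ^ (k - 1) := one_mul _

theorem stmt_16 (lam : ℕ → ℝ)
    (hroot : ∀ k : ℕ, Odd k → 3 ≤ k →
      lam k ∈ Set.Ioo (1 : ℝ) (2 * (k : ℝ) / ((k : ℝ) + 1)) ∧
      (lam k - 2) ^ 2 * (1 - lam k) ^ (k - 1) + 2 * lam k - 3 = 0) :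
    (∀ k₁ k₂, Odd k₁ → Odd k₂ → 3 ≤ k₁ → k₁ < k₂ → lam k₁ < lam k₂) ∧
    Filter.Tendsto (fun n => lam (2 * n + 3)) Filter.atTop (nhds (3 / 2)) := by
  constructor
  · intro k₁ k₂ hk₁ hk₂ h3 hlt
    have h3' : 3 ≤ k₂ := le_trans h3 (le_of_lt hlt)
    obtain ⟨⟨ha1, ha2⟩, haeq⟩ := hroot k₁ hk₁ h3
    obtain ⟨⟨hb1, hb2⟩, hbeq⟩ := hroot k₂ hk₂ h3'
    set a := lam k₁; set b := lam k₂
    obtain ⟨ha32, hadiv, -⟩ := aux_root k₁ hk₁ a ha1 ha2 haeq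
    obtain ⟨hb32, hbdiv, -⟩ := aux_root k₂ hk₂ b hb1 hb2 hbeq
    by_contra hcon
    push_neg at hcon
    -- hcon : b ≤ a
    have hm : k₁ - 1 < k₂ - 1 := by omega
    have key1 : (b - 1) ^ (k₂ - 1) < (b - 1) ^ (k₁ - 1) :=
      pow_lt_pow_right_of_lt_one₀ (by linarith) (by linarith) hm
    have key2 : (b - 1) ^ (k₁ - 1) ≤ (a - 1) ^ (k₁ - 1) :=
      pow_le_pow_left₀ (by linarith) (by linarith) _
    have key3 : (a - 1) ^ (k₁ - 1) ≤ (b - 1) ^ (k₂ - 1) := by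
      rw [hadiv, hbdiv, div_le_div_iff₀ (by nlinarith) (by nlinarith)]
      nlinarith [mul_nonneg (sub_nonneg.2 hcon) (by linarith : (0:ℝ) ≤ a - 1),
        mul_nonneg (mul_nonneg (sub_nonneg.2 hcon) (by linarith : (0:ℝ) ≤ b - 1))
          (by linarith : (0:ℝ) ≤ 3 - 2 * a)]
    linarith
  · have hle : ∀ n : ℕ, 3 / 2 - (1 / 2 : ℝ) ^ (2 * n + 2) / 2 ≤ lam (2 * n + 3) ∧
        lam (2 * n + 3) ≤ 3 / 2 := by
      intro n
      have hodd : Odd (2 * n + 3) := ⟨n + 1, by ring⟩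
      obtain ⟨⟨h1, h2⟩, heq⟩ := hroot (2 * n + 3) hodd (by omega)
      obtain ⟨h32, -, hub⟩ := aux_root (2 * n + 3) hodd _ h1 h2 heq
      rw [show 2 * n + 3 - 1 = 2 * n + 2 from by omega] at hub
      exact ⟨by linarith, le_of_lt h32⟩
    have h2n : Filter.Tendsto (fun n : ℕ => 2 * n + 2) Filter.atTop Filter.atTop :=
      Filter.tendsto_atTop_mono (fun n => by simp only [id_eq]; omega) Filter.tendsto_id
    have h0 : Filter.Tendsto (fun n : ℕ => (1 / 2 : ℝ) ^ (2 * n + 2))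
        Filter.atTop (nhds 0) :=
      (tendsto_pow_atTop_nhds_zero_of_lt_one (by norm_num) (by norm_num)).comp h2n
    have hlow : Filter.Tendsto (fun n : ℕ => 3 / 2 - (1 / 2 : ℝ) ^ (2 * n + 2) / 2)
        Filter.atTop (nhds (3 / 2)) := by
      have := Filter.Tendsto.const_sub (3 / 2 : ℝ) (h0.div_const 2)
      simpa using this
    exact tendsto_of_tendsto_of_tendsto_of_le_of_le hlow tendsto_const_nhds
      (fun n => (hle n).1) (fun n => (hle n).2)
end

section
/- For every even integer k ≥ 4, the value f(2k/(k+1)) = (2k/(k+1) − 2)^2 (2k/(k+1) − 1)^{k−1} + 3 satisfies f(2k/(k+1)) ≤ 13/4, while g(2k/(k+1)) = 2·(2k/(k+1)) = 4 − 4/(k+1) satisfies g(2k/(k+1)) > f(2k/(k+1)). -/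
theorem stmt_19 (k : ℕ) (hk : Even k) (hk4 : 4 ≤ k) :
    ((2 * (k : ℝ) / (k + 1) - 2) ^ 2 * (2 * (k : ℝ) / (k + 1) - 1) ^ (k - 1) + 3 ≤ 13 / 4) ∧
    (2 * (2 * (k : ℝ) / (k + 1)) = 4 - 4 / ((k : ℝ) + 1)) ∧
    ((2 * (k : ℝ) / (k + 1) - 2) ^ 2 * (2 * (k : ℝ) / (k + 1) - 1) ^ (k - 1) + 3 <
      2 * (2 * (k : ℝ) / (k + 1))) := by
  set x : ℝ := (k : ℝ) with hxdef
  have hx : (4:ℝ) ≤ x := by rw [hxdef]; exact_mod_cast hk4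
  have hx1 : (0:ℝ) < x + 1 := by linarith
  have hx1' : x + 1 ≠ 0 := ne_of_gt hx1
  have hbase : 2 * x / (x + 1) - 1 = (x - 1) / (x + 1) := by field_simp; ring
  have hb0 : (0:ℝ) ≤ (x - 1) / (x + 1) := div_nonneg (by linarith) (le_of_lt hx1)
  have hb1 : (x - 1) / (x + 1) ≤ 1 := by rw [div_le_one hx1]; linarith
  have hp1 : (2 * x / (x + 1) - 1) ^ (k - 1) ≤ 1 := by
    rw [hbase]; exact pow_le_one₀ hb0 hb1
  have hp0 : (0:ℝ) ≤ (2 * x / (x + 1) - 1) ^ (k - 1) := by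
    rw [hbase]; exact pow_nonneg hb0 _
  have hsq : (2 * x / (x + 1) - 2) ^ 2 = 4 / (x + 1) ^ 2 := by
    field_simp; ring
  have hterm : (2 * x / (x + 1) - 2) ^ 2 * (2 * x / (x + 1) - 1) ^ (k - 1)
      ≤ 4 / (x + 1) ^ 2 := by
    rw [hsq]
    calc 4 / (x + 1) ^ 2 * (2 * x / (x + 1) - 1) ^ (k - 1)
        ≤ 4 / (x + 1) ^ 2 * 1 := by
          apply mul_le_mul_of_nonneg_left hp1; positivity
      _ = 4 / (x + 1) ^ 2 := by ring
  have hterm0 : (0:ℝ) ≤ (2 * x / (x + 1) - 2) ^ 2 * (2 * x / (x + 1) - 1) ^ (k - 1) :=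
    mul_nonneg (sq_nonneg _) hp0
  have hcancel2 : 4 / (x + 1) ^ 2 * (x + 1) ^ 2 = 4 := by field_simp
  have hcancel1 : 4 / (x + 1) * (x + 1) = 4 := by field_simp
  have hq : 4 / (x + 1) ^ 2 ≤ 4 / 25 := by
    rw [div_le_div_iff₀ (by positivity) (by norm_num)]
    nlinarith
  refine ⟨by linarith, by field_simp; ring, ?_⟩
  have hmain : 4 / (x + 1) ^ 2 + 3 < 4 - 4 / (x + 1) := by
    have h2 : (0:ℝ) < (x + 1) ^ 2 := by positivity
    nlinarith [sq_nonneg (x - 1)]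
  have hg : 2 * (2 * x / (x + 1)) = 4 - 4 / (x + 1) := by field_simp; ring
  rw [hg]
  linarith
end
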